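/- Let (σ^{k₂}_{k,k₁})_{k,k₁,k₂∈ℤ} be complex numbers. Set A := sup_{k,k₁} (Σ_{k₂} |σ^{k₂}_{k,k₁}|²)^{1/2} and B := sup_{k,k'} (Σ_{k₁,k₁' : (k,k₁) ≠ (k',k₁')} | Σ_{k₂} σ^{k₂}_{k',k₁'} · conj(σ^{k₂}_{k,k₁}) |²)^{1/4}, and assume A < ∞ and B < ∞. Then for every b : ℤ × ℤ → ℂ with ‖b‖_{ℓ¹_k ℓ²_{k₁}} := Σ_{k} (Σ_{k₁} |b_{k,k₁}|²)^{1/2} < ∞, the function 𝒢b defined by (𝒢b)(k₂) := Σ_{k,k₁} σ^{k₂}_{k,k₁} b_{k,k₁} satisfies ‖𝒢b‖_{ℓ²(ℤ)} ≤ (A + B) ‖b‖_{ℓ¹_k ℓ²_{k₁}}. -/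

import Mathlib

open scoped Classical

lemma cs_tsum {ι : Type*} (x y : ι → ℝ) (hx : ∀ i, 0 ≤ x i) (hy : ∀ i, 0 ≤ y i)
    (hx2 : Summable fun i => x i ^ 2) (hy2 : Summable fun i => y i ^ 2) :
    Summable (fun i => x i * y i) ∧
      ∑' i, x i * y i ≤ Real.sqrt (∑' i, x i ^ 2) * Real.sqrt (∑' i, y i ^ 2) := by
  have hsum : Summable (fun i => x i * y i) := by
    apply Summable.of_nonneg_of_le (fun i => mul_nonneg (hx i) (hy i))
      (fun i => ?_) ((hx2.add hy2).div_const 2)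
    nlinarith [sq_nonneg (x i - y i)]
  refine ⟨hsum, Summable.tsum_le_of_sum_le hsum fun s => ?_⟩
  have h1 : (∑ i ∈ s, x i * y i) ^ 2 ≤ (∑ i ∈ s, x i ^ 2) * (∑ i ∈ s, y i ^ 2) :=
    Finset.sum_mul_sq_le_sq_mul_sq s x y
  have hxs : ∑ i ∈ s, x i ^ 2 ≤ ∑' i, x i ^ 2 := Summable.sum_le_tsum s (fun i _ => sq_nonneg _) hx2
  have hys : ∑ i ∈ s, y i ^ 2 ≤ ∑' i, y i ^ 2 := Summable.sum_le_tsum s (fun i _ => sq_nonneg _) hy2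
  have h0 : 0 ≤ ∑ i ∈ s, x i * y i := Finset.sum_nonneg fun i _ => mul_nonneg (hx i) (hy i)
  calc ∑ i ∈ s, x i * y i = Real.sqrt ((∑ i ∈ s, x i * y i) ^ 2) := (Real.sqrt_sq h0).symm
    _ ≤ Real.sqrt ((∑' i, x i ^ 2) * (∑' i, y i ^ 2)) := by
        apply Real.sqrt_le_sqrt
        calc (∑ i ∈ s, x i * y i) ^ 2 ≤ (∑ i ∈ s, x i ^ 2) * (∑ i ∈ s, y i ^ 2) := h1
          _ ≤ _ := mul_le_mul hxs hys (Finset.sum_nonneg fun i _ => sq_nonneg _)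
              (tsum_nonneg fun _ => sq_nonneg _)
    _ = _ := Real.sqrt_mul (tsum_nonneg fun _ => sq_nonneg _) _

/-- the coordinate-swapping involution on `(ℤ×ℤ)×(ℤ×ℤ)`. -/
def swapE : ((ℤ × ℤ) × (ℤ × ℤ)) ≃ ((ℤ × ℤ) × (ℤ × ℤ)) where
  toFun r := ((r.1.1, r.2.1), (r.1.2, r.2.2))
  invFun r := ((r.1.1, r.2.1), (r.1.2, r.2.2))
  left_inv := by rintro ⟨⟨a, b⟩, ⟨c, d⟩⟩; rfl
  right_inv := by rintro ⟨⟨a, b⟩, ⟨c, d⟩⟩; rfl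

theorem stmt9 (σ : ℤ → ℤ → ℤ → ℂ) (A B : ℝ) (hA0 : 0 ≤ A) (hB0 : 0 ≤ B)
    (hAsum : ∀ k k₁ : ℤ, Summable (fun k₂ => ‖σ k k₁ k₂‖ ^ 2))
    (hA : ∀ k k₁ : ℤ, (∑' k₂, ‖σ k k₁ k₂‖ ^ 2) ≤ A ^ 2)
    (hBsum : ∀ k k' : ℤ, Summable (fun q : ℤ × ℤ =>
      if (k, q.1) ≠ (k', q.2) then
        ‖∑' k₂, σ k' q.2 k₂ * (starRingEnd ℂ) (σ k q.1 k₂)‖ ^ 2 else 0))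
    (hB : ∀ k k' : ℤ, (∑' q : ℤ × ℤ,
        if (k, q.1) ≠ (k', q.2) then
          ‖∑' k₂, σ k' q.2 k₂ * (starRingEnd ℂ) (σ k q.1 k₂)‖ ^ 2 else 0) ≤ B ^ 4)
    (b : ℤ → ℤ → ℂ)
    (hb2 : ∀ k : ℤ, Summable (fun k₁ => ‖b k k₁‖ ^ 2))
    (hb1 : Summable (fun k => Real.sqrt (∑' k₁, ‖b k k₁‖ ^ 2)))
    (hconv : ∀ k₂ : ℤ, Summable (fun p : ℤ × ℤ => σ p.1 p.2 k₂ * b p.1 p.2)) :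
    Summable (fun k₂ => ‖∑' p : ℤ × ℤ, σ p.1 p.2 k₂ * b p.1 p.2‖ ^ 2) ∧
      Real.sqrt (∑' k₂, ‖∑' p : ℤ × ℤ, σ p.1 p.2 k₂ * b p.1 p.2‖ ^ 2) ≤
        (A + B) * ∑' k, Real.sqrt (∑' k₁, ‖b k k₁‖ ^ 2) := by
  classical
  set β : ℤ → ℝ := fun k => Real.sqrt (∑' k₁, ‖b k k₁‖ ^ 2) with hβdef
  have hβ0 : ∀ k, 0 ≤ β k := fun k => Real.sqrt_nonneg _
  have hβsq : ∀ k, β k ^ 2 = ∑' k₁, ‖b k k₁‖ ^ 2 := fun k =>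
    Real.sq_sqrt (tsum_nonneg fun _ => sq_nonneg _)
  set C : ℝ := ∑' k, β k with hCdef
  have hC0 : 0 ≤ C := tsum_nonneg fun k => hβ0 k
  have hβle : ∀ k, β k ≤ C := fun k => Summable.le_tsum hb1 k fun j _ => hβ0 j
  have hβ2sum : Summable fun k => β k ^ 2 := by
    apply Summable.of_nonneg_of_le (fun k => sq_nonneg _) (fun k => ?_) (hb1.mul_left C)
    nlinarith [hβ0 k, hβle k]
  have hbsqprod : Summable fun p : ℤ × ℤ => ‖b p.1 p.2‖ ^ 2 := by
    refine (summable_prod_of_nonneg fun p => sq_nonneg _).2 ⟨fun k => hb2 k, ?_⟩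
    simp only [← hβsq]
    exact hβ2sum
  have hbsqle : (∑' p : ℤ × ℤ, ‖b p.1 p.2‖ ^ 2) ≤ C ^ 2 := by
    have h1 : (∑' p : ℤ × ℤ, ‖b p.1 p.2‖ ^ 2) = ∑' k, ∑' k₁, ‖b k k₁‖ ^ 2 :=
      Summable.tsum_prod' hbsqprod fun k => hb2 k
    rw [h1]
    have h2 : ∀ k, (∑' k₁, ‖b k k₁‖ ^ 2) ≤ C * β k := fun k => by
      rw [← hβsq]; nlinarith [hβ0 k, hβle k]
    calc (∑' k, ∑' k₁, ‖b k k₁‖ ^ 2) ≤ ∑' k, C * β k := by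
          refine Summable.tsum_le_tsum h2 ?_ (hb1.mul_left C)
          simp only [← hβsq]; exact hβ2sum
      _ = C * C := by rw [tsum_mul_left]
      _ = C ^ 2 := (sq C).symm
  -- the Gram coefficients
  have hGsum : ∀ p p' : ℤ × ℤ,
      Summable fun k₂ => σ p'.1 p'.2 k₂ * (starRingEnd ℂ) (σ p.1 p.2 k₂) := by
    intro p p'
    apply Summable.of_norm
    apply Summable.of_nonneg_of_le (fun k₂ => norm_nonneg _) (fun k₂ => ?_)
      (((hAsum p'.1 p'.2).add (hAsum p.1 p.2)).div_const 2)
    rw [norm_mul, RCLike.norm_conj]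
    nlinarith [sq_nonneg (‖σ p'.1 p'.2 k₂‖ - ‖σ p.1 p.2 k₂‖)]
  have hGdiag : ∀ p : ℤ × ℤ,
      ‖∑' k₂, σ p.1 p.2 k₂ * (starRingEnd ℂ) (σ p.1 p.2 k₂)‖ ≤ A ^ 2 := by
    intro p
    have h1 : (∑' k₂, σ p.1 p.2 k₂ * (starRingEnd ℂ) (σ p.1 p.2 k₂))
        = ((∑' k₂, ‖σ p.1 p.2 k₂‖ ^ 2 : ℝ) : ℂ) := by
      rw [Complex.ofReal_tsum]
      exact tsum_congr fun k₂ => by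
        rw [Complex.mul_conj]
        norm_cast
        rw [Complex.normSq_eq_norm_sq]
    rw [h1, Complex.norm_real, Real.norm_eq_abs, abs_of_nonneg (tsum_nonneg fun _ => sq_nonneg _)]
    exact hA p.1 p.2
  -- off-diagonal quantity
  set Foff : (ℤ × ℤ) × (ℤ × ℤ) → ℝ := fun r =>
    if r.1 ≠ r.2 then ‖b r.2.1 r.2.2‖ * ‖b r.1.1 r.1.2‖ *
      ‖∑' k₂, σ r.2.1 r.2.2 k₂ * (starRingEnd ℂ) (σ r.1.1 r.1.2 k₂)‖ else 0 with hFoffdef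
  have hFoff0 : ∀ r, 0 ≤ Foff r := by
    intro r
    rw [hFoffdef]
    dsimp only
    split_ifs
    · positivity
    · exact le_refl 0
  have hstep1 : ∀ k k' : ℤ,
      Summable (fun q : ℤ × ℤ => Foff ((k, q.1), (k', q.2))) ∧
        (∑' q : ℤ × ℤ, Foff ((k, q.1), (k', q.2))) ≤ β k * β k' * B ^ 2 := by
    intro k k'
    have hxy : (fun q : ℤ × ℤ => Foff ((k, q.1), (k', q.2))) = fun q =>
        (‖b k q.1‖ * ‖b k' q.2‖) *
          (if (k, q.1) ≠ (k', q.2) then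
            ‖∑' k₂, σ k' q.2 k₂ * (starRingEnd ℂ) (σ k q.1 k₂)‖ else 0) := by
      funext q
      rw [hFoffdef]
      dsimp only
      split_ifs with hc
      · ring
      · rw [mul_zero]
    have hx2 : Summable fun q : ℤ × ℤ => (‖b k q.1‖ * ‖b k' q.2‖) ^ 2 := by
      have := (hb2 k).mul_of_nonneg (hb2 k') (fun _ => sq_nonneg _) (fun _ => sq_nonneg _)
      apply this.congr
      intro q
      rw [mul_pow]
    have hx2sum : (∑' q : ℤ × ℤ, (‖b k q.1‖ * ‖b k' q.2‖) ^ 2) = β k ^ 2 * β k' ^ 2 := by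
      rw [Summable.tsum_prod' hx2 fun k₁ => by
        apply ((hb2 k').mul_left (‖b k k₁‖ ^ 2)).congr
        intro k₁'
        rw [mul_pow]]
      calc (∑' k₁, ∑' k₁', (‖b k k₁‖ * ‖b k' k₁'‖) ^ 2)
          = ∑' k₁, ‖b k k₁‖ ^ 2 * ∑' k₁', ‖b k' k₁'‖ ^ 2 := by
            refine tsum_congr fun k₁ => ?_
            rw [← tsum_mul_left]
            exact tsum_congr fun k₁' => by rw [mul_pow]
        _ = (∑' k₁, ‖b k k₁‖ ^ 2) * ∑' k₁', ‖b k' k₁'‖ ^ 2 := by rw [tsum_mul_right]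
        _ = β k ^ 2 * β k' ^ 2 := by rw [hβsq, hβsq]
    have hy2 : Summable fun q : ℤ × ℤ =>
        (if (k, q.1) ≠ (k', q.2) then
          ‖∑' k₂, σ k' q.2 k₂ * (starRingEnd ℂ) (σ k q.1 k₂)‖ else 0) ^ 2 := by
      refine (hBsum k k').congr fun q => ?_
      split_ifs with hc
      · rfl
      · rw [zero_pow]; norm_num
    have hy2sum : (∑' q : ℤ × ℤ,
        (if (k, q.1) ≠ (k', q.2) then
          ‖∑' k₂, σ k' q.2 k₂ * (starRingEnd ℂ) (σ k q.1 k₂)‖ else 0) ^ 2) ≤ B ^ 4 := by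
      refine le_trans (le_of_eq (tsum_congr fun q => ?_)) (hB k k')
      split_ifs with hc
      · rfl
      · rw [zero_pow]; norm_num
    have hcs := cs_tsum (fun q : ℤ × ℤ => ‖b k q.1‖ * ‖b k' q.2‖)
      (fun q : ℤ × ℤ => if (k, q.1) ≠ (k', q.2) then
          ‖∑' k₂, σ k' q.2 k₂ * (starRingEnd ℂ) (σ k q.1 k₂)‖ else 0)
      (fun q => mul_nonneg (norm_nonneg _) (norm_nonneg _))
      (fun q => by split_ifs; exacts [norm_nonneg _, le_refl 0]) hx2 hy2
    rw [hxy]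
    refine ⟨hcs.1, le_trans hcs.2 ?_⟩
    rw [hx2sum]
    calc Real.sqrt (β k ^ 2 * β k' ^ 2) * Real.sqrt (∑' q : ℤ × ℤ,
          (if (k, q.1) ≠ (k', q.2) then
            ‖∑' k₂, σ k' q.2 k₂ * (starRingEnd ℂ) (σ k q.1 k₂)‖ else 0) ^ 2)
        ≤ Real.sqrt (β k ^ 2 * β k' ^ 2) * Real.sqrt (B ^ 4) :=
          mul_le_mul_of_nonneg_left (Real.sqrt_le_sqrt hy2sum) (Real.sqrt_nonneg _)
      _ = β k * β k' * B ^ 2 := by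
          rw [show β k ^ 2 * β k' ^ 2 = (β k * β k') ^ 2 by ring,
            show (B : ℝ) ^ 4 = (B ^ 2) ^ 2 by ring,
            Real.sqrt_sq (mul_nonneg (hβ0 k) (hβ0 k')), Real.sqrt_sq (by positivity)]
  -- summability and bound for Foff
  have hmaj : Summable fun u : ℤ × ℤ => β u.1 * β u.2 * B ^ 2 :=
    (hb1.mul_of_nonneg hb1 (fun k => hβ0 k) (fun k => hβ0 k)).mul_right _
  have hinner : Summable fun u : ℤ × ℤ => ∑' q : ℤ × ℤ, Foff ((u.1, q.1), (u.2, q.2)) :=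
    Summable.of_nonneg_of_le (fun u => tsum_nonneg fun q => hFoff0 _)
      (fun u => (hstep1 u.1 u.2).2) hmaj
  have hhsum : Summable fun s : (ℤ × ℤ) × (ℤ × ℤ) => Foff ((s.1.1, s.2.1), (s.1.2, s.2.2)) :=
    (summable_prod_of_nonneg fun s => hFoff0 _).2 ⟨fun u => (hstep1 u.1 u.2).1, hinner⟩
  have hhtsum : (∑' s : (ℤ × ℤ) × (ℤ × ℤ), Foff ((s.1.1, s.2.1), (s.1.2, s.2.2)))
      ≤ B ^ 2 * C ^ 2 := by
    rw [Summable.tsum_prod' hhsum fun u => (hstep1 u.1 u.2).1]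
    calc (∑' u : ℤ × ℤ, ∑' q : ℤ × ℤ, Foff ((u.1, q.1), (u.2, q.2)))
        ≤ ∑' u : ℤ × ℤ, β u.1 * β u.2 * B ^ 2 :=
          Summable.tsum_le_tsum (fun u => (hstep1 u.1 u.2).2) hinner hmaj
      _ = B ^ 2 * C ^ 2 := by
          have e1 : (fun u : ℤ × ℤ => β u.1 * β u.2 * B ^ 2)
              = fun u : ℤ × ℤ => B ^ 2 * (β u.1 * β u.2) := by funext u; ring
          rw [e1, tsum_mul_left]
          congr 1
          rw [Summable.tsum_prod' (hb1.mul_of_nonneg hb1 (fun k => hβ0 k) fun k => hβ0 k)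
            fun k => hb1.mul_left (β k)]
          calc (∑' k, ∑' k', β k * β k') = ∑' k, β k * C :=
                tsum_congr fun k => tsum_mul_left
            _ = C * C := by rw [tsum_mul_right]
            _ = C ^ 2 := (sq C).symm
  have hFoffsum : Summable Foff := swapE.summable_iff.1 hhsum
  have hFofftsum : (∑' r, Foff r) ≤ B ^ 2 * C ^ 2 := by
    rw [← Equiv.tsum_eq swapE Foff]
    exact hhtsum
  -- products with the coefficients b
  have hcsum : ∀ p p' : ℤ × ℤ, Summable (fun k₂ =>
      (σ p'.1 p'.2 k₂ * b p'.1 p'.2) * (starRingEnd ℂ) (σ p.1 p.2 k₂ * b p.1 p.2)) := by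
    intro p p'
    have he : (fun k₂ => (σ p'.1 p'.2 k₂ * b p'.1 p'.2) *
          (starRingEnd ℂ) (σ p.1 p.2 k₂ * b p.1 p.2))
        = fun k₂ => (σ p'.1 p'.2 k₂ * (starRingEnd ℂ) (σ p.1 p.2 k₂)) *
          (b p'.1 p'.2 * (starRingEnd ℂ) (b p.1 p.2)) := by
      funext k₂; rw [map_mul]; ring
    rw [he]; exact (hGsum p p').mul_right _
  have hctsum : ∀ p p' : ℤ × ℤ, (∑' k₂,
      (σ p'.1 p'.2 k₂ * b p'.1 p'.2) * (starRingEnd ℂ) (σ p.1 p.2 k₂ * b p.1 p.2))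
      = (∑' k₂, σ p'.1 p'.2 k₂ * (starRingEnd ℂ) (σ p.1 p.2 k₂)) *
        (b p'.1 p'.2 * (starRingEnd ℂ) (b p.1 p.2)) := by
    intro p p'
    rw [← tsum_mul_right]
    exact tsum_congr fun k₂ => by rw [map_mul]; ring
  have hexp : ∀ (F : Finset (ℤ × ℤ)) (k₂ : ℤ), ‖∑ p ∈ F, σ p.1 p.2 k₂ * b p.1 p.2‖ ^ 2
      = (∑ p' ∈ F, ∑ p ∈ F,
        (σ p'.1 p'.2 k₂ * b p'.1 p'.2) * (starRingEnd ℂ) (σ p.1 p.2 k₂ * b p.1 p.2)).re := by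
    intro F k₂
    have h1 : (∑ p' ∈ F, ∑ p ∈ F,
        (σ p'.1 p'.2 k₂ * b p'.1 p'.2) * (starRingEnd ℂ) (σ p.1 p.2 k₂ * b p.1 p.2))
        = (∑ p' ∈ F, σ p'.1 p'.2 k₂ * b p'.1 p'.2) *
          (starRingEnd ℂ) (∑ p ∈ F, σ p.1 p.2 k₂ * b p.1 p.2) := by
      rw [map_sum, Finset.sum_mul_sum]
    rw [h1, Complex.mul_conj]
    simp [Complex.normSq_eq_norm_sq, ← Complex.ofReal_pow]
  -- bound for the partial sums
  have hpart : ∀ F : Finset (ℤ × ℤ),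
      Summable (fun k₂ => ‖∑ p ∈ F, σ p.1 p.2 k₂ * b p.1 p.2‖ ^ 2) ∧
        (∑' k₂, ‖∑ p ∈ F, σ p.1 p.2 k₂ * b p.1 p.2‖ ^ 2)
          ≤ A ^ 2 * C ^ 2 + B ^ 2 * C ^ 2 := by
    intro F
    have hWsum : Summable (fun k₂ => ∑ p' ∈ F, ∑ p ∈ F,
        (σ p'.1 p'.2 k₂ * b p'.1 p'.2) * (starRingEnd ℂ) (σ p.1 p.2 k₂ * b p.1 p.2)) :=
      summable_sum fun p' _ => summable_sum fun p _ => hcsum p p'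
    have hS : Summable (fun k₂ => ‖∑ p ∈ F, σ p.1 p.2 k₂ * b p.1 p.2‖ ^ 2) := by
      simp only [hexp F]
      exact (Complex.hasSum_re hWsum.hasSum).summable
    refine ⟨hS, ?_⟩
    have ht : (∑' k₂, ‖∑ p ∈ F, σ p.1 p.2 k₂ * b p.1 p.2‖ ^ 2)
        = (∑ p' ∈ F, ∑ p ∈ F, (∑' k₂,
          (σ p'.1 p'.2 k₂ * b p'.1 p'.2) * (starRingEnd ℂ) (σ p.1 p.2 k₂ * b p.1 p.2))).re := by
      calc (∑' k₂, ‖∑ p ∈ F, σ p.1 p.2 k₂ * b p.1 p.2‖ ^ 2)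
          = ∑' k₂, (∑ p' ∈ F, ∑ p ∈ F,
            (σ p'.1 p'.2 k₂ * b p'.1 p'.2) * (starRingEnd ℂ) (σ p.1 p.2 k₂ * b p.1 p.2)).re :=
            tsum_congr (hexp F)
        _ = (∑' k₂, ∑ p' ∈ F, ∑ p ∈ F,
            (σ p'.1 p'.2 k₂ * b p'.1 p'.2) * (starRingEnd ℂ) (σ p.1 p.2 k₂ * b p.1 p.2)).re :=
            (Complex.re_tsum hWsum).symm
        _ = (∑ p' ∈ F, ∑ p ∈ F, (∑' k₂,
            (σ p'.1 p'.2 k₂ * b p'.1 p'.2) * (starRingEnd ℂ) (σ p.1 p.2 k₂ * b p.1 p.2))).re := by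
            rw [Summable.tsum_finsetSum fun p' _ => summable_sum fun p _ => hcsum p p']
            congr 1
            exact Finset.sum_congr rfl fun p' _ => Summable.tsum_finsetSum fun p _ => hcsum p p'
    rw [ht]
    have hbound : (∑ p' ∈ F, ∑ p ∈ F, (∑' k₂,
        (σ p'.1 p'.2 k₂ * b p'.1 p'.2) * (starRingEnd ℂ) (σ p.1 p.2 k₂ * b p.1 p.2))).re
        ≤ ∑ p' ∈ F, ∑ p ∈ F, ‖b p'.1 p'.2‖ * ‖b p.1 p.2‖ *
          ‖∑' k₂, σ p'.1 p'.2 k₂ * (starRingEnd ℂ) (σ p.1 p.2 k₂)‖ := by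
      calc (∑ p' ∈ F, ∑ p ∈ F, (∑' k₂,
          (σ p'.1 p'.2 k₂ * b p'.1 p'.2) * (starRingEnd ℂ) (σ p.1 p.2 k₂ * b p.1 p.2))).re
          ≤ ‖∑ p' ∈ F, ∑ p ∈ F, (∑' k₂,
            (σ p'.1 p'.2 k₂ * b p'.1 p'.2) * (starRingEnd ℂ) (σ p.1 p.2 k₂ * b p.1 p.2))‖ := by
            exact Complex.re_le_norm _
        _ ≤ ∑ p' ∈ F, ∑ p ∈ F, ‖∑' k₂,
            (σ p'.1 p'.2 k₂ * b p'.1 p'.2) * (starRingEnd ℂ) (σ p.1 p.2 k₂ * b p.1 p.2)‖ :=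
            le_trans (norm_sum_le F _) (Finset.sum_le_sum fun p' _ => norm_sum_le F _)
        _ = ∑ p' ∈ F, ∑ p ∈ F, ‖b p'.1 p'.2‖ * ‖b p.1 p.2‖ *
            ‖∑' k₂, σ p'.1 p'.2 k₂ * (starRingEnd ℂ) (σ p.1 p.2 k₂)‖ := by
            refine Finset.sum_congr rfl fun p' _ => Finset.sum_congr rfl fun p _ => ?_
            rw [hctsum p p', norm_mul, norm_mul, RCLike.norm_conj]
            ring
    refine le_trans hbound ?_
    have split : (∑ p' ∈ F, ∑ p ∈ F, ‖b p'.1 p'.2‖ * ‖b p.1 p.2‖ *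
        ‖∑' k₂, σ p'.1 p'.2 k₂ * (starRingEnd ℂ) (σ p.1 p.2 k₂)‖)
        = (∑ p' ∈ F, ∑ p ∈ F, if p = p' then ‖b p'.1 p'.2‖ * ‖b p.1 p.2‖ *
            ‖∑' k₂, σ p'.1 p'.2 k₂ * (starRingEnd ℂ) (σ p.1 p.2 k₂)‖ else 0)
          + (∑ p' ∈ F, ∑ p ∈ F, if p ≠ p' then ‖b p'.1 p'.2‖ * ‖b p.1 p.2‖ *
            ‖∑' k₂, σ p'.1 p'.2 k₂ * (starRingEnd ℂ) (σ p.1 p.2 k₂)‖ else 0) := by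
      rw [← Finset.sum_add_distrib]
      refine Finset.sum_congr rfl fun p' _ => ?_
      rw [← Finset.sum_add_distrib]
      refine Finset.sum_congr rfl fun p _ => ?_
      by_cases h : p = p' <;> simp [h]
    rw [split]
    have hdiag : (∑ p' ∈ F, ∑ p ∈ F, if p = p' then ‖b p'.1 p'.2‖ * ‖b p.1 p.2‖ *
        ‖∑' k₂, σ p'.1 p'.2 k₂ * (starRingEnd ℂ) (σ p.1 p.2 k₂)‖ else 0) ≤ A ^ 2 * C ^ 2 := by
      calc (∑ p' ∈ F, ∑ p ∈ F, if p = p' then ‖b p'.1 p'.2‖ * ‖b p.1 p.2‖ *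
          ‖∑' k₂, σ p'.1 p'.2 k₂ * (starRingEnd ℂ) (σ p.1 p.2 k₂)‖ else 0)
          = ∑ p' ∈ F, ‖b p'.1 p'.2‖ * ‖b p'.1 p'.2‖ *
            ‖∑' k₂, σ p'.1 p'.2 k₂ * (starRingEnd ℂ) (σ p'.1 p'.2 k₂)‖ := by
            refine Finset.sum_congr rfl fun p' hp' => ?_
            rw [Finset.sum_ite_eq' F p' _, if_pos hp']
        _ ≤ ∑ p' ∈ F, ‖b p'.1 p'.2‖ ^ 2 * A ^ 2 := by
            refine Finset.sum_le_sum fun p' _ => ?_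
            rw [show ‖b p'.1 p'.2‖ * ‖b p'.1 p'.2‖ *
              ‖∑' k₂, σ p'.1 p'.2 k₂ * (starRingEnd ℂ) (σ p'.1 p'.2 k₂)‖
              = ‖b p'.1 p'.2‖ ^ 2 *
                ‖∑' k₂, σ p'.1 p'.2 k₂ * (starRingEnd ℂ) (σ p'.1 p'.2 k₂)‖ by ring]
            exact mul_le_mul_of_nonneg_left (hGdiag p') (sq_nonneg _)
        _ = (∑ p' ∈ F, ‖b p'.1 p'.2‖ ^ 2) * A ^ 2 := (Finset.sum_mul _ _ _).symm
        _ ≤ C ^ 2 * A ^ 2 := by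
            refine mul_le_mul_of_nonneg_right ?_ (sq_nonneg A)
            exact (Summable.sum_le_tsum F (fun _ _ => sq_nonneg _) hbsqprod).trans hbsqle
        _ = A ^ 2 * C ^ 2 := mul_comm _ _
    have hoff : (∑ p' ∈ F, ∑ p ∈ F, if p ≠ p' then ‖b p'.1 p'.2‖ * ‖b p.1 p.2‖ *
        ‖∑' k₂, σ p'.1 p'.2 k₂ * (starRingEnd ℂ) (σ p.1 p.2 k₂)‖ else 0) ≤ B ^ 2 * C ^ 2 := by
      rw [Finset.sum_comm]
      have h2 : (∑ p ∈ F, ∑ p' ∈ F, if p ≠ p' then ‖b p'.1 p'.2‖ * ‖b p.1 p.2‖ *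
          ‖∑' k₂, σ p'.1 p'.2 k₂ * (starRingEnd ℂ) (σ p.1 p.2 k₂)‖ else 0)
          = ∑ r ∈ F ×ˢ F, Foff r := by
        rw [Finset.sum_product]
      rw [h2]
      exact (Summable.sum_le_tsum _ (fun r _ => hFoff0 r) hFoffsum).trans hFofftsum
    exact add_le_add hdiag hoff
  -- pass to the limit
  have hkey : ∀ K : Finset ℤ,
      (∑ k₂ ∈ K, ‖∑' p : ℤ × ℤ, σ p.1 p.2 k₂ * b p.1 p.2‖ ^ 2)
        ≤ A ^ 2 * C ^ 2 + B ^ 2 * C ^ 2 := by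
    intro K
    have htend : Filter.Tendsto
        (fun F : Finset (ℤ × ℤ) => ∑ k₂ ∈ K, ‖∑ p ∈ F, σ p.1 p.2 k₂ * b p.1 p.2‖ ^ 2)
        Filter.atTop
        (nhds (∑ k₂ ∈ K, ‖∑' p : ℤ × ℤ, σ p.1 p.2 k₂ * b p.1 p.2‖ ^ 2)) := by
      apply tendsto_finset_sum
      intro k₂ _
      exact ((hconv k₂).hasSum.norm.pow 2)
    refine le_of_tendsto htend (Filter.Eventually.of_forall fun F => ?_)
    exact (Summable.sum_le_tsum K (fun _ _ => sq_nonneg _) (hpart F).1).trans (hpart F).2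
  have hsummain : Summable (fun k₂ => ‖∑' p : ℤ × ℤ, σ p.1 p.2 k₂ * b p.1 p.2‖ ^ 2) :=
    summable_of_sum_le (fun k₂ => sq_nonneg _) hkey
  refine ⟨hsummain, ?_⟩
  have h6 : (∑' k₂, ‖∑' p : ℤ × ℤ, σ p.1 p.2 k₂ * b p.1 p.2‖ ^ 2)
      ≤ A ^ 2 * C ^ 2 + B ^ 2 * C ^ 2 := Summable.tsum_le_of_sum_le hsummain hkey
  calc Real.sqrt (∑' k₂, ‖∑' p : ℤ × ℤ, σ p.1 p.2 k₂ * b p.1 p.2‖ ^ 2)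
      ≤ Real.sqrt (((A + B) * C) ^ 2) := by
        apply Real.sqrt_le_sqrt
        refine h6.trans ?_
        nlinarith [mul_nonneg (mul_nonneg hA0 hB0) (sq_nonneg C)]
    _ = (A + B) * C := Real.sqrt_sq (by positivity)
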